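/- The symplectic eigenvalues of a real symmetric positive definite 2N×2N matrix A are the positive eigenvalues of the matrix iσA: if S A Sᵀ = diag(a₁,a₁,…,a_N,a_N) is a Williamson form of A with S ∈ Sp(2N,ℝ) and a_i > 0, then the characteristic polynomial of the complex matrix i·σ·A (entries of σ and A viewed as complex numbers) equals ∏_{j=1}^N (X − a_j)(X + a_j); in particular the spectrum of iσA is {a_j, −a_j : j = 1,…,N}. -/
import Mathlib


open Matrix Polynomial
open ComplexOrder

noncomputable section

/-- The standard symplectic form matrix: block diagonal with 2×2 blocks [[0,1],[-1,0]]. -/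
def symplForm (n : ℕ) : Matrix (Fin n) (Fin n) ℝ :=
  Matrix.of fun i j =>
    if (i : ℕ) + 1 = (j : ℕ) ∧ (i : ℕ) % 2 = 0 then 1
    else if (j : ℕ) + 1 = (i : ℕ) ∧ (j : ℕ) % 2 = 0 then -1 else 0

/-- Membership in the real symplectic group: `S σ Sᵀ = σ`. -/
def IsSymplectic {n : ℕ} (S : Matrix (Fin n) (Fin n) ℝ) : Prop :=
  S * symplForm n * Sᵀ = symplForm n

/-- The Williamson diagonal matrix `diag(a₁,a₁,…,a_N,a_N)`. -/
def WDiag {N : ℕ} (a : Fin N → ℝ) : Matrix (Fin (2 * N)) (Fin (2 * N)) ℝ :=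
  Matrix.diagonal fun i => a ⟨(i : ℕ) / 2, by have := i.isLt; omega⟩

/-- A covariance matrix: real symmetric with `γ + iσ` positive semidefinite. -/
def IsCovMatrix {n : ℕ} (γ : Matrix (Fin n) (Fin n) ℝ) : Prop :=
  γ.IsSymm ∧
    (γ.map (Complex.ofReal) + Complex.I • (symplForm n).map Complex.ofReal).PosSemidef

/-- The block-diagonal direct sum of two square matrices. -/
def dirSum {m n : ℕ} (A : Matrix (Fin m) (Fin m) ℝ) (B : Matrix (Fin n) (Fin n) ℝ) :
    Matrix (Fin (m + n)) (Fin (m + n)) ℝ :=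
  Matrix.reindex finSumFinEquiv finSumFinEquiv (Matrix.fromBlocks A 0 0 B)

/-- Separability of a covariance matrix with respect to the split `A|B`. -/
def IsSepCov (nA nB : ℕ) (γ : Matrix (Fin (nA + nB)) (Fin (nA + nB)) ℝ) : Prop :=
  ∃ (γA : Matrix (Fin nA) (Fin nA) ℝ) (γB : Matrix (Fin nB) (Fin nB) ℝ),
    IsCovMatrix γA ∧ IsCovMatrix γB ∧ (γ - dirSum γA γB).PosSemidef

namespace SymplAux

def pe (N : ℕ) : Fin 2 × Fin N ≃ Fin (2 * N) where
  toFun p := ⟨2 * p.2 + p.1, by have := p.1.isLt; have := p.2.isLt; omega⟩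
  invFun k := (⟨(k : ℕ) % 2, by omega⟩, ⟨(k : ℕ) / 2, by have := k.isLt; omega⟩)
  left_inv := by
    rintro ⟨⟨r, hr⟩, ⟨q, hq⟩⟩
    simp only [Prod.mk.injEq]
    constructor <;> (ext; simp; omega)
  right_inv := by rintro ⟨k, hk⟩; ext; simp; omega

lemma pe_symm_apply (N : ℕ) (k : Fin (2 * N)) :
    (pe N).symm k = (⟨(k : ℕ) % 2, by omega⟩, ⟨(k : ℕ) / 2, by have := k.isLt; omega⟩) := rfl

/-- The complex 2×2 block `[[0,1],[-1,0]]`. -/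
def Jc : Matrix (Fin 2) (Fin 2) ℂ :=
  Matrix.of fun r s => if (r : ℕ) = 0 ∧ (s : ℕ) = 1 then 1
    else if (r : ℕ) = 1 ∧ (s : ℕ) = 0 then -1 else 0

/-- The 2×2 block `i·[[0,α],[-α,0]]`. -/
def Bc (α : ℝ) : Matrix (Fin 2) (Fin 2) ℂ :=
  Matrix.of fun r s => if (r : ℕ) = 0 ∧ (s : ℕ) = 1 then Complex.I * α
    else if (r : ℕ) = 1 ∧ (s : ℕ) = 0 then -(Complex.I * α) else 0

lemma symplForm_map_eq (N : ℕ) :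
    (symplForm (2 * N)).map Complex.ofReal =
      Matrix.reindex (pe N) (pe N) (Matrix.blockDiagonal fun _ : Fin N => Jc) := by
  ext i j
  simp only [symplForm, Matrix.of_apply, reindex_apply, submatrix_apply, pe_symm_apply,
    blockDiagonal_apply, Jc, Fin.mk.injEq, Matrix.map_apply]
  have hi := i.isLt; have hj := j.isLt
  by_cases h : (i : ℕ) / 2 = (j : ℕ) / 2 <;>
    simp [h] <;> split_ifs <;> first | omega | (norm_num; omega) | norm_num

lemma WDiag_map_eq {N : ℕ} (a : Fin N → ℝ) :
    (WDiag a).map Complex.ofReal = Matrix.reindex (pe N) (pe N)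
      (Matrix.blockDiagonal fun q => Matrix.diagonal fun _ : Fin 2 => (a q : ℂ)) := by
  ext i j
  simp only [WDiag, diagonal_apply, reindex_apply, submatrix_apply, pe_symm_apply,
    blockDiagonal_apply, Fin.mk.injEq, Fin.ext_iff, Matrix.map_apply, apply_ite Complex.ofReal,
    Complex.ofReal_zero]
  have hi := i.isLt; have hj := j.isLt
  split_ifs <;> first | omega | rfl | (norm_num; congr 1; exact Fin.ext (by omega))

lemma Jc_mul_Jc : Jc * Jc = -1 := by
  ext r s
  fin_cases r <;> fin_cases s <;>
    simp [Jc, Matrix.mul_apply, Fin.sum_univ_two, Matrix.one_apply]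

lemma smul_block (α : ℝ) :
    Complex.I • (Jc * Matrix.diagonal fun _ : Fin 2 => (α : ℂ)) = Bc α := by
  ext r s
  fin_cases r <;> fin_cases s <;>
    simp [Jc, Bc, Matrix.mul_apply, Fin.sum_univ_two, Matrix.diagonal_apply]

lemma charpoly_Bc (α : ℝ) :
    (Bc α).charpoly = (X - C (α : ℂ)) * (X + C (α : ℂ)) := by
  have h00 : Bc α 0 0 = 0 := by norm_num [Bc]
  have h11 : Bc α 1 1 = 0 := by norm_num [Bc]
  have h01 : Bc α 0 1 = Complex.I * α := by norm_num [Bc]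
  have h10 : Bc α 1 0 = -(Complex.I * α) := by norm_num [Bc]
  rw [Matrix.charpoly, Matrix.det_fin_two, charmatrix_apply_eq, charmatrix_apply_eq,
    charmatrix_apply_ne _ _ _ (by norm_num), charmatrix_apply_ne _ _ _ (by norm_num),
    h00, h11, h01, h10]
  have key : (C (Complex.I * (α:ℂ)) : ℂ[X]) * C (-(Complex.I * (α:ℂ))) = C (α:ℂ) ^ 2 := by
    rw [← C_mul, ← map_pow]
    congr 1
    linear_combination (-(α:ℂ) ^ 2) * Complex.I_mul_I
  rw [map_zero]
  ring_nf
  rw [key]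

lemma reindex_mul {m n : Type*} [Fintype m] [DecidableEq n] [Fintype n] (e : m ≃ n)
    (X Y : Matrix m m ℂ) :
    (Matrix.reindex e e X) * (Matrix.reindex e e Y) = Matrix.reindex e e (X * Y) := by
  simp [reindex_apply, Matrix.submatrix_mul_equiv]

lemma charmatrix_blockDiagonal {R : Type*} [CommRing R] {n o : Type*} [DecidableEq n] [Fintype n]
    [DecidableEq o] [Fintype o] (M : o → Matrix n n R) :
    charmatrix (Matrix.blockDiagonal M) = Matrix.blockDiagonal fun k => charmatrix (M k) := by
  ext ⟨i, k⟩ ⟨j, k'⟩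
  rw [charmatrix_apply]
  by_cases hk : k = k'
  · subst hk
    by_cases hij : i = j <;>
      simp [blockDiagonal_apply, hij, diagonal_apply, Prod.ext_iff, charmatrix_apply]
  · simp [blockDiagonal_apply, hk, diagonal_apply, Prod.ext_iff, charmatrix_apply]

lemma charpoly_blockDiagonal {R : Type*} [CommRing R] {n o : Type*} [DecidableEq n] [Fintype n]
    [DecidableEq o] [Fintype o] (M : o → Matrix n n R) :
    (Matrix.blockDiagonal M).charpoly = ∏ k, (M k).charpoly := by
  rw [Matrix.charpoly, charmatrix_blockDiagonal, Matrix.det_blockDiagonal]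
  rfl

lemma charpoly_conj {R : Type*} [CommRing R] {n : Type*} [DecidableEq n] [Fintype n]
    (P Q M : Matrix n n R) (h1 : P * Q = 1) :
    (P * M * Q).charpoly = M.charpoly := by
  have key : charmatrix (P * M * Q) =
      (C : R →+* R[X]).mapMatrix P * charmatrix M * (C : R →+* R[X]).mapMatrix Q := by
    have hsc : (Matrix.scalar n (X : R[X])) =
        (C : R →+* R[X]).mapMatrix P * Matrix.scalar n (X : R[X])
          * (C : R →+* R[X]).mapMatrix Q := by
      rw [mul_assoc, scalar_commute (X : R[X]) (Commute.all _) _, ← mul_assoc, ← _root_.map_mul,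
        h1, _root_.map_one, one_mul]
    rw [charmatrix, charmatrix, mul_sub, sub_mul, ← hsc, ← _root_.map_mul, ← _root_.map_mul]
  rw [Matrix.charpoly, key, det_mul, det_mul, mul_comm, ← mul_assoc, ← det_mul,
    show (C : R →+* R[X]).mapMatrix Q * (C : R →+* R[X]).mapMatrix P = 1 by
      rw [← _root_.map_mul, mul_eq_one_comm.mp h1, _root_.map_one],
    det_one, one_mul, Matrix.charpoly]

lemma eval_charpoly {R : Type*} [CommRing R] {n : Type*} [DecidableEq n] [Fintype n]
    (M : Matrix n n R) (z : R) :
    M.charpoly.eval z = (Matrix.scalar n z - M).det := by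
  rw [Matrix.charpoly, ← coe_evalRingHom, RingHom.map_det]
  congr 1
  ext i j
  by_cases h : i = j <;>
    simp [h, charmatrix_apply, diagonal_apply, Matrix.scalar_apply, Matrix.sub_apply]

lemma map_mul_ofReal {m : Type*} [Fintype m] (X Y : Matrix m m ℝ) :
    (X * Y).map Complex.ofReal = X.map Complex.ofReal * Y.map Complex.ofReal :=
  Matrix.map_mul (f := Complex.ofRealHom)

end SymplAux

/-- The symplectic eigenvalues of `A` are the positive eigenvalues of `iσA`. -/
theorem symplectic_eigenvalues_via_i_sigma_A (N : ℕ) (hN : 1 ≤ N)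
    (A : Matrix (Fin (2 * N)) (Fin (2 * N)) ℝ) (hAsymm : A.IsSymm) (hApos : A.PosDef)
    (S : Matrix (Fin (2 * N)) (Fin (2 * N)) ℝ) (a : Fin N → ℝ)
    (hS : IsSymplectic S) (ha : ∀ i, 0 < a i) (hW : S * A * Sᵀ = WDiag a) :
    (Complex.I • ((symplForm (2 * N)).map Complex.ofReal * A.map Complex.ofReal)).charpoly =
        ∏ j : Fin N, ((X - C ((a j : ℝ) : ℂ)) * (X + C ((a j : ℝ) : ℂ))) ∧
      spectrum ℂ (Complex.I • ((symplForm (2 * N)).map Complex.ofReal * A.map Complex.ofReal)) =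
        {z : ℂ | ∃ j : Fin N, z = ((a j : ℝ) : ℂ) ∨ z = -((a j : ℝ) : ℂ)} := by
  classical
  set s : Matrix (Fin (2 * N)) (Fin (2 * N)) ℂ := (symplForm (2 * N)).map Complex.ofReal
    with hs_def
  set Ac : Matrix (Fin (2 * N)) (Fin (2 * N)) ℂ := A.map Complex.ofReal with hAc_def
  set Sc : Matrix (Fin (2 * N)) (Fin (2 * N)) ℂ := S.map Complex.ofReal with hSc_def
  set Dc : Matrix (Fin (2 * N)) (Fin (2 * N)) ℂ := (WDiag a).map Complex.ofReal with hDc_def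
  have htr : ∀ X : Matrix (Fin (2 * N)) (Fin (2 * N)) ℝ,
      Xᵀ.map Complex.ofReal = (X.map Complex.ofReal)ᵀ := fun X => Matrix.transpose_map
  have hS' : S * symplForm (2 * N) * Sᵀ = symplForm (2 * N) := hS
  have h1 : Sc * s * Scᵀ = s := by
    rw [hSc_def, hs_def, ← htr, ← SymplAux.map_mul_ofReal, ← SymplAux.map_mul_ofReal, hS']
  have h2 : Sc * Ac * Scᵀ = Dc := by
    rw [hSc_def, hAc_def, hDc_def, ← htr, ← SymplAux.map_mul_ofReal, ← SymplAux.map_mul_ofReal,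
      hW]
  have hss : s * s = -1 := by
    rw [hs_def, SymplAux.symplForm_map_eq, SymplAux.reindex_mul, ← Matrix.blockDiagonal_mul]
    have hJ : (fun _ : Fin N => SymplAux.Jc * SymplAux.Jc) =
        fun _ : Fin N => -(1 : Matrix (Fin 2) (Fin 2) ℂ) := by
      funext k; rw [SymplAux.Jc_mul_Jc]
    rw [hJ]
    have hneg : Matrix.blockDiagonal (fun _ : Fin N => -(1 : Matrix (Fin 2) (Fin 2) ℂ)) =
        -(1 : Matrix (Fin 2 × Fin N) (Fin 2 × Fin N) ℂ) := by
      rw [show (fun _ : Fin N => -(1 : Matrix (Fin 2) (Fin 2) ℂ)) =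
        -(1 : Fin N → Matrix (Fin 2) (Fin 2) ℂ) from rfl, Matrix.blockDiagonal_neg,
        Matrix.blockDiagonal_one]
    rw [hneg]
    ext i j
    simp [Matrix.submatrix_apply, Matrix.neg_apply, Matrix.one_apply, Equiv.apply_eq_iff_eq]
  have hM1 : Complex.I • (s * Dc) = Matrix.reindex (SymplAux.pe N) (SymplAux.pe N)
      (Matrix.blockDiagonal fun j => SymplAux.Bc (a j)) := by
    rw [hs_def, hDc_def, SymplAux.symplForm_map_eq, SymplAux.WDiag_map_eq,
      SymplAux.reindex_mul, ← Matrix.blockDiagonal_mul]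
    have hb : (Complex.I • fun j => SymplAux.Jc * Matrix.diagonal fun _ : Fin 2 => ((a j : ℝ) : ℂ))
        = fun j => SymplAux.Bc (a j) := funext fun j => SymplAux.smul_block (a j)
    rw [reindex_apply, reindex_apply, ← hb, Matrix.blockDiagonal_smul, Matrix.submatrix_smul]
    rfl
  -- the "inverse" of Sc
  set T : Matrix (Fin (2 * N)) (Fin (2 * N)) ℂ := s * Scᵀ * (-s) with hT_def
  have hST : Sc * T = 1 := by
    rw [hT_def]
    calc Sc * (s * Scᵀ * (-s)) = (Sc * s * Scᵀ) * (-s) := by noncomm_ring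
    _ = s * (-s) := by rw [h1]
    _ = 1 := by rw [mul_neg, hss, neg_neg]
  have hTS : T * Sc = 1 := mul_eq_one_comm.mp hST
  have hTt : Scᵀ * Tᵀ = 1 := by rw [← Matrix.transpose_mul, hTS, Matrix.transpose_one]
  have hA' : Ac = T * Dc * Tᵀ := by
    rw [← h2]
    calc Ac = (T * Sc) * Ac * (Scᵀ * Tᵀ) := by rw [hTS, hTt, one_mul, mul_one]
    _ = T * (Sc * Ac * Scᵀ) * Tᵀ := by noncomm_ring
  have hTsT : T * s * Tᵀ = s := by
    conv_lhs => rw [← h1]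
    calc T * (Sc * s * Scᵀ) * Tᵀ = (T * Sc) * s * (Scᵀ * Tᵀ) := by noncomm_ring
    _ = s := by rw [hTS, hTt, one_mul, mul_one]
  set P : Matrix (Fin (2 * N)) (Fin (2 * N)) ℂ := s * T * (-s) with hP_def
  have hPQ : P * Tᵀ = 1 := by
    rw [hP_def]
    calc s * T * (-s) * Tᵀ = -(s * (T * s * Tᵀ)) := by noncomm_ring
    _ = -(s * s) := by rw [hTsT]
    _ = 1 := by rw [hss, neg_neg]
  have hns : (-s) * s = 1 := by rw [neg_mul, hss, neg_neg]
  have hconj : Complex.I • (s * Ac) = P * (Complex.I • (s * Dc)) * Tᵀ := by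
    have hswap : P * (Complex.I • (s * Dc)) * Tᵀ = Complex.I • (P * (s * Dc) * Tᵀ) := by
      rw [Matrix.mul_smul, Matrix.smul_mul]
    rw [hswap, hA']
    congr 1
    symm
    calc P * (s * Dc) * Tᵀ = s * T * ((-s) * s) * (Dc * Tᵀ) := by rw [hP_def]; noncomm_ring
    _ = s * T * (Dc * Tᵀ) := by rw [hns, mul_one]
    _ = s * (T * Dc * Tᵀ) := by noncomm_ring
  have hchar : (Complex.I • (s * Ac)).charpoly =
      ∏ j : Fin N, ((X - C ((a j : ℝ) : ℂ)) * (X + C ((a j : ℝ) : ℂ))) := by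
    rw [hconj, SymplAux.charpoly_conj _ _ _ hPQ, hM1, Matrix.charpoly_reindex,
      SymplAux.charpoly_blockDiagonal]
    exact Finset.prod_congr rfl fun j _ => SymplAux.charpoly_Bc (a j)
  refine ⟨hchar, ?_⟩
  ext z
  rw [Set.mem_setOf_eq, spectrum.mem_iff, Matrix.isUnit_iff_isUnit_det, isUnit_iff_ne_zero,
    not_ne_iff]
  have hdet : (algebraMap ℂ (Matrix (Fin (2 * N)) (Fin (2 * N)) ℂ) z
      - Complex.I • (s * Ac)).det = ((Complex.I • (s * Ac)).charpoly).eval z := by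
    rw [SymplAux.eval_charpoly]
    congr 2 <;> simp [Matrix.scalar_apply, Matrix.algebraMap_eq_diagonal]
  rw [hdet, hchar, eval_prod]
  simp only [eval_mul, eval_sub, eval_add, eval_X, eval_C]
  rw [Finset.prod_eq_zero_iff]
  simp only [Finset.mem_univ, true_and, mul_eq_zero, sub_eq_zero, add_eq_zero_iff_eq_neg]
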